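/- arXiv:1602.05267 — 2 statements merged into one kernel-verified Lean document; each statement's English description precedes it below -/
import Mathlib

section
/- Let n ≥ 2, g ≥ 2 be integers and (k,l) a pair of integers with k(n−1) + l ≥ (n−1)g. Assume every vector bundle E of rank n and degree d on X has a line subbundle L with d − n·deg(L) ≤ (n−1)g (the Hirschowitz bound for m = 1). Then there exists no (k,l)-stable vector bundle of rank n and degree d on X. -/
/-- Abstract numerical data of vector bundles on a smooth projective curve:
each bundle has a positive rank and a degree, and `Sub F E` means that
`F` is a proper nonzero subbundle of `E`. -/
structure CurveBundles where
  Bundle : Type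
  rk : Bundle → ℕ
  deg : Bundle → ℤ
  Sub : Bundle → Bundle → Prop
  rk_pos : ∀ E, 0 < rk E
  sub_rk_lt : ∀ {F E}, Sub F E → rk F < rk E

namespace CurveBundles

/-- The generalised slope `μ_a(E) = (deg E + a)/rk E`. -/
def mu (S : CurveBundles) (a : ℤ) (E : S.Bundle) : ℚ :=
  ((S.deg E + a : ℤ) : ℚ) / (S.rk E : ℚ)

/-- `E` is `(k,l)`-stable: `μ_k(F) < μ_{k-l}(E)` for every proper nonzero subbundle `F`. -/
def KLStable (S : CurveBundles) (k l : ℤ) (E : S.Bundle) : Prop :=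
  ∀ F, S.Sub F E → S.mu k F < S.mu (k - l) E

/-- `E` is `(k,l)`-semistable. -/
def KLSemistable (S : CurveBundles) (k l : ℤ) (E : S.Bundle) : Prop :=
  ∀ F, S.Sub F E → S.mu k F ≤ S.mu (k - l) E

/-- `E` is stable. -/
def IsStable (S : CurveBundles) (E : S.Bundle) : Prop :=
  ∀ F, S.Sub F E → S.mu 0 F < S.mu 0 E

/-- `E` is semistable. -/
def IsSemistable (S : CurveBundles) (E : S.Bundle) : Prop :=
  ∀ F, S.Sub F E → S.mu 0 F ≤ S.mu 0 E

end CurveBundles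

/-- If `k(n-1) + l ≥ (n-1)g` and every bundle of rank `n` and degree `d` has a line
subbundle `L` with `d - n·deg L ≤ (n-1)g` (Hirschowitz bound for `m = 1`), then
there exists no `(k,l)`-stable bundle of rank `n` and degree `d`. -/
theorem no_kl_stable_bundles (S : CurveBundles) (n : ℕ) (g d k l : ℤ)
    (hn : 2 ≤ n) (hg : 2 ≤ g)
    (hkl : ((n : ℤ) - 1) * g ≤ k * ((n : ℤ) - 1) + l)
    (hline : ∀ E, S.rk E = n → S.deg E = d →
      ∃ L, S.Sub L E ∧ S.rk L = 1 ∧ d - (n : ℤ) * S.deg L ≤ ((n : ℤ) - 1) * g) :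
    ∀ E, S.rk E = n → S.deg E = d → ¬ S.KLStable k l E := by
  intro E hrk hdeg hst
  obtain ⟨L, hLE, hL1, hbound⟩ := hline E hrk hdeg
  have h := hst L hLE
  unfold CurveBundles.mu at h
  rw [hL1, hrk, hdeg] at h
  have hn0 : (0:ℚ) < (n:ℚ) := by exact_mod_cast lt_of_lt_of_le two_pos hn
  have h2 := (div_lt_div_iff₀ (by norm_num) hn0).mp h
  have h3 : (S.deg L + k) * (n:ℤ) < (d + (k - l)) * 1 := by exact_mod_cast h2
  nlinarith [h3, hbound, hkl]
end

section
/- Let E and F be (k,l)-stable vector bundles on a smooth projective curve X and let f : E → F be a nonzero morphism of vector bundles with image subbundle F₁ ⊂ F of rank r = rk(f) and quotient bundle E₁ of E (so E ↠ E₁ and rk E₁ = r, with a map E₁ → F₁ of degree deg E₁ ≤ deg F₁). Then μ_{k−l}(E) < μ_{k−l}(F) − (k+l)/r. -/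
/-- If `f : E → F` is a nonzero non-isomorphism between `(k,l)`-stable bundles, with
image subbundle `F₁ ⊂ F` of rank `r = rk f` and corresponding proper quotient `E₁` of
`E` (realised as `E/K` for a proper subbundle `K ⊂ E`) of rank `r` with
`deg E₁ ≤ deg F₁`, then `μ_{k-l}(E) < μ_{k-l}(F) - (k+l)/r`. -/
theorem mu_lt_of_hom (S : CurveBundles) (k l : ℤ) (r : ℕ) (hr : 0 < r)
    (E F E₁ F₁ K : S.Bundle)
    (hE : S.KLStable k l E) (hF : S.KLStable k l F)
    (hK : S.Sub K E)
    (hrkE₁ : (S.rk E₁ : ℤ) = (S.rk E : ℤ) - (S.rk K : ℤ))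
    (hdegE₁ : S.deg E₁ = S.deg E - S.deg K)
    (hF₁ : S.Sub F₁ F)
    (hrE₁ : S.rk E₁ = r) (hrF₁ : S.rk F₁ = r)
    (hdeg : S.deg E₁ ≤ S.deg F₁) :
    S.mu (k - l) E < S.mu (k - l) F - ((k + l : ℤ) : ℚ) / (r : ℚ) := by
  have hK' := hE K hK
  have hF' := hF F₁ hF₁
  have hrK : (0:ℚ) < (S.rk K : ℚ) := by exact_mod_cast S.rk_pos K
  have hrE : (0:ℚ) < (S.rk E : ℚ) := by exact_mod_cast S.rk_pos E
  have hrF : (0:ℚ) < (S.rk F : ℚ) := by exact_mod_cast S.rk_pos F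
  have hrQ : (0:ℚ) < (r:ℚ) := by exact_mod_cast hr
  have hsum : (S.rk E : ℚ) = (S.rk K : ℚ) + (r:ℚ) := by
    have h1 : ((r:ℤ)) = (S.rk E : ℤ) - (S.rk K : ℤ) := by rw [← hrkE₁, hrE₁]
    have := h1
    push_cast at this ⊢
    exact_mod_cast by linarith [this]
  unfold CurveBundles.mu at hK' hF' ⊢
  rw [hrF₁] at hF'
  push_cast at hK' hF' ⊢
  have hdeg' : ((S.deg E₁ : ℤ):ℚ) ≤ ((S.deg F₁:ℤ):ℚ) := by exact_mod_cast hdeg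
  have hdegE₁' : ((S.deg E₁:ℤ):ℚ) = ((S.deg E:ℤ):ℚ) - ((S.deg K:ℤ):ℚ) := by
    exact_mod_cast hdegE₁
  rw [hsum] at hK' ⊢
  rw [div_lt_div_iff₀ hrK (by linarith : (0:ℚ) < (S.rk K:ℚ) + r)] at hK'
  rw [div_lt_div_iff₀ hrQ hrF] at hF'
  have h2 : ((S.deg E:ℚ) + ((k:ℚ) - l)) / ((S.rk K:ℚ) + r)
      < ((S.deg E:ℚ) - (S.deg K:ℚ) - (l:ℚ)) / (r:ℚ) := by
    rw [div_lt_div_iff₀ (by linarith) hrQ]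
    nlinarith [hK']
  have h4 : ((S.deg F₁:ℚ) + (k:ℚ)) / (r:ℚ) < ((S.deg F:ℚ) + ((k:ℚ) - l)) / (S.rk F:ℚ) := by
    rw [div_lt_div_iff₀ hrQ hrF]
    linarith [hF']
  have h3 : ((S.deg E:ℚ) - (S.deg K:ℚ) - (l:ℚ)) / (r:ℚ)
      ≤ ((S.deg F₁:ℚ) - (l:ℚ)) / (r:ℚ) := by
    gcongr
    linarith [hdeg', hdegE₁']
  have key : ((S.deg F₁:ℚ) - (l:ℚ)) / (r:ℚ) + ((k:ℚ) + l) / (r:ℚ)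
      = ((S.deg F₁:ℚ) + (k:ℚ)) / (r:ℚ) := by
    rw [← add_div]; ring_nf
  linarith [h2, h3, h4, key]
end
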